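/- Let G be a connected Δ-regular finite simple graph with Δ ≤ 5, and let G* be any finite simple graph. If A(G*;x) = A(G;x) as polynomials, then G* is Δ-regular and has the same order and the same size as G. -/

import Mathlib

set_option linter.unusedSectionVars false
set_option linter.unnecessarySimpa false
set_option linter.unusedVariables false
set_option maxHeartbeats 1000000

open Polynomial Finset

/-- Number of neighbors of `v` inside the set `S` (denoted δ_S(v)). -/
def SimpleGraph.degIn {V : Type*} [Fintype V] [DecidableEq V]
    (G : SimpleGraph V) [DecidableRel G.Adj] (S : Finset V) (v : V) : ℕ :=
  (S.filter (fun u => G.Adj v u)).card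

/-- Number of neighbors of `v` outside the set `S` (denoted δ_{S̄}(v)). -/
def SimpleGraph.degOut {V : Type*} [Fintype V] [DecidableEq V]
    (G : SimpleGraph V) [DecidableRel G.Adj] (S : Finset V) (v : V) : ℕ :=
  (Sᶜ.filter (fun u => G.Adj v u)).card

/-- `S` is an exact defensive `k`-alliance in `G`: the induced subgraph `⟨S⟩` is connected
(in particular `S` is nonempty) and `k = k_S = min_{v ∈ S} (δ_S(v) - δ_{S̄}(v))`. -/
def SimpleGraph.IsExactAlliance {V : Type*} [Fintype V] [DecidableEq V]
    (G : SimpleGraph V) [DecidableRel G.Adj] (S : Finset V) (k : ℤ) : Prop :=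
  (G.induce (S : Set V)).Connected ∧
    (∀ v ∈ S, k ≤ (G.degIn S v : ℤ) - (G.degOut S v : ℤ)) ∧
    (∃ v ∈ S, (G.degIn S v : ℤ) - (G.degOut S v : ℤ) = k)

/-- `A_k(G)`: the number of exact defensive `k`-alliances in `G`. -/
noncomputable def SimpleGraph.allianceCoeff {V : Type*} [Fintype V] [DecidableEq V]
    (G : SimpleGraph V) [DecidableRel G.Adj] (k : ℤ) : ℕ :=
  Set.ncard {S : Finset V | G.IsExactAlliance S k}

/-- The alliance polynomial `A(G;x) = Σ_{k=-Δ}^{Δ} A_k(G) x^{n+k}`, where `n` is the order and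
`Δ` the maximum degree of `G`, regarded as a real polynomial. -/
noncomputable def SimpleGraph.alliancePoly {V : Type*} [Fintype V] [DecidableEq V]
    (G : SimpleGraph V) [DecidableRel G.Adj] : Polynomial ℝ :=
  ∑ k ∈ Finset.Icc (-(G.maxDegree : ℤ)) (G.maxDegree : ℤ),
    (G.allianceCoeff k : ℝ) • X ^ (((Fintype.card V : ℤ) + k).toNat)

namespace SimpleGraph

variable {V : Type*} [Fintype V] [DecidableEq V] (G : SimpleGraph V) [DecidableRel G.Adj]

/-- Reachability within a finset of vertices. -/
def RW (S : Finset V) : V → V → Prop :=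
  Relation.ReflTransGen (fun x y => x ∈ S ∧ y ∈ S ∧ G.Adj x y)

variable {G}

lemma RW.refl {S : Finset V} {a : V} : G.RW S a a := Relation.ReflTransGen.refl

lemma RW.mono {S T : Finset V} (hST : S ⊆ T) {a b : V} (h : G.RW S a b) : G.RW T a b := by
  induction h with
  | refl => exact .refl
  | tail _ hstep ih => exact ih.tail ⟨hST hstep.1, hST hstep.2.1, hstep.2.2⟩

lemma RW.mem_right {S : Finset V} {a b : V} (ha : a ∈ S) (h : G.RW S a b) : b ∈ S := by
  induction h with
  | refl => exact ha
  | tail _ hstep _ => exact hstep.2.1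

lemma RW.symm {S : Finset V} {a b : V} (h : G.RW S a b) : G.RW S b a := by
  induction h with
  | refl => exact .refl
  | tail _ hstep ih =>
      exact (Relation.ReflTransGen.single ⟨hstep.2.1, hstep.1, hstep.2.2.symm⟩).trans ih

lemma RW.trans {S : Finset V} {a b c : V} (h : G.RW S a b) (h' : G.RW S b c) : G.RW S a c :=
  Relation.ReflTransGen.trans h h'

lemma rw_of_reachable {S : Finset V} {a b : ↥(S : Set V)}
    (h : (G.induce (S : Set V)).Reachable a b) : G.RW S a.1 b.1 := by
  obtain ⟨w⟩ := h
  induction w with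
  | nil => exact .refl
  | @cons u v w h p ih =>
      refine Relation.ReflTransGen.head ?_ ih
      exact ⟨by simpa using u.2, by simpa using v.2, h⟩

lemma reachable_of_rw {S : Finset V} {a b : V} (h : G.RW S a b) :
    ∀ (ha : a ∈ S) (hb : b ∈ S),
      (G.induce (S : Set V)).Reachable ⟨a, by simpa⟩ ⟨b, by simpa⟩ := by
  induction h with
  | refl => exact fun ha _ => Reachable.refl _
  | @tail b c hab hstep ih =>
      intro ha hc
      have hadj : (G.induce (S : Set V)).Adj ⟨b, by simpa using hstep.1⟩ ⟨c, by simpa using hc⟩ := by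
        simpa using hstep.2.2
      exact (ih ha hstep.1).trans hadj.reachable

/-- Connectivity of the induced subgraph in terms of `RW`. -/
lemma conn_iff {S : Finset V} :
    (G.induce (S : Set V)).Connected ↔ S.Nonempty ∧ ∀ a ∈ S, ∀ b ∈ S, G.RW S a b := by
  rw [connected_iff]
  constructor
  · rintro ⟨hpre, hne⟩
    constructor
    · obtain ⟨⟨x, hx⟩⟩ := hne
      exact ⟨x, by simpa using hx⟩
    · intro a ha b hb
      exact rw_of_reachable (hpre ⟨a, by simpa⟩ ⟨b, by simpa⟩)
  · rintro ⟨⟨x, hx⟩, hrw⟩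
    refine ⟨?_, ⟨⟨x, by simpa using hx⟩⟩⟩
    rintro ⟨a, ha⟩ ⟨b, hb⟩
    have ha' : a ∈ S := by simpa using ha
    have hb' : b ∈ S := by simpa using hb
    exact reachable_of_rw (hrw a ha' b hb') ha' hb'

end SimpleGraph

namespace SimpleGraph

variable {V : Type*} [Fintype V] [DecidableEq V] {G : SimpleGraph V} [DecidableRel G.Adj]

attribute [local instance] Classical.propDecidable

lemma neighborFinset_eq_filter' (v : V) :
    G.neighborFinset v = Finset.univ.filter (fun u => G.Adj v u) := by
  ext u; simp

lemma degIn_add_degOut (S : Finset V) (v : V) :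
    G.degIn S v + G.degOut S v = G.degree v := by
  classical
  rw [SimpleGraph.degIn, SimpleGraph.degOut, SimpleGraph.degree, neighborFinset_eq_filter']
  rw [← Finset.card_union_of_disjoint
    (Finset.disjoint_filter_filter disjoint_compl_right)]
  rw [← Finset.filter_union, Finset.union_compl]

lemma degIn_le_card {S : Finset V} (v : V) : G.degIn S v ≤ S.card :=
  Finset.card_le_card (Finset.filter_subset _ _)

lemma degOut_le_card {S : Finset V} (v : V) : G.degOut S v ≤ Sᶜ.card :=
  Finset.card_le_card (Finset.filter_subset _ _)

/-- The connected component of `v` inside the finset `S`, as a finset. -/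
noncomputable def comp (G : SimpleGraph V) [DecidableRel G.Adj] (S : Finset V) (v : V) :
    Finset V :=
  S.filter (fun u => G.RW S v u)

lemma mem_comp {S : Finset V} {v u : V} :
    u ∈ G.comp S v ↔ u ∈ S ∧ G.RW S v u := by
  simp [SimpleGraph.comp]

lemma comp_subset {S : Finset V} {v : V} : G.comp S v ⊆ S := Finset.filter_subset _ _

lemma self_mem_comp {S : Finset V} {v : V} (hv : v ∈ S) : v ∈ G.comp S v :=
  mem_comp.2 ⟨hv, RW.refl⟩

lemma comp_closed {S : Finset V} {v x y : V} (hx : x ∈ G.comp S v) (hy : y ∈ S)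
    (hadj : G.Adj x y) : y ∈ G.comp S v := by
  obtain ⟨hxS, hrw⟩ := mem_comp.1 hx
  exact mem_comp.2 ⟨hy, hrw.tail ⟨hxS, hy, hadj⟩⟩

lemma rw_comp {S : Finset V} {v a : V} (hv : v ∈ S) (h : G.RW S v a) :
    G.RW (G.comp S v) v a := by
  induction h with
  | refl => exact .refl
  | @tail b c hab hstep ih =>
      refine ih.tail ⟨?_, ?_, hstep.2.2⟩
      · exact mem_comp.2 ⟨hstep.1, hab⟩
      · exact mem_comp.2 ⟨hstep.2.1, hab.tail hstep⟩

lemma conn_comp {S : Finset V} {v : V} (hv : v ∈ S) :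
    (G.induce ((G.comp S v : Finset V) : Set V)).Connected := by
  rw [conn_iff]
  refine ⟨⟨v, self_mem_comp hv⟩, ?_⟩
  intro a ha b hb
  have hva : G.RW (G.comp S v) v a := rw_comp hv (mem_comp.1 ha).2
  have hvb : G.RW (G.comp S v) v b := rw_comp hv (mem_comp.1 hb).2
  exact hva.symm.trans hvb

lemma degIn_comp {S : Finset V} {v u : V} (hu : u ∈ G.comp S v) :
    G.degIn (G.comp S v) u = G.degIn S u := by
  unfold SimpleGraph.degIn
  congr 1
  apply Finset.Subset.antisymm
  · exact Finset.filter_subset_filter _ comp_subset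
  · intro y hy
    rw [Finset.mem_filter] at hy ⊢
    exact ⟨comp_closed hu hy.1 hy.2, hy.2⟩

/-- Every nonempty connected finset is an exact alliance for its minimum value. -/
lemma exists_alliance_of_conn {S : Finset V}
    (h : (G.induce (S : Set V)).Connected) : ∃ k : ℤ, G.IsExactAlliance S k := by
  have hne : S.Nonempty := ((conn_iff).1 h).1
  have hne' : (S.image (fun v => (G.degIn S v : ℤ) - (G.degOut S v : ℤ))).Nonempty :=
    hne.image _
  refine ⟨(S.image (fun v => (G.degIn S v : ℤ) - (G.degOut S v : ℤ))).min' hne', h, ?_, ?_⟩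
  · intro v hv
    exact Finset.min'_le _ _ (Finset.mem_image_of_mem _ hv)
  · obtain ⟨v, hv, hv'⟩ := Finset.mem_image.1 (Finset.min'_mem _ hne')
    exact ⟨v, hv, hv'⟩

lemma IsExactAlliance.nonempty {S : Finset V} {k : ℤ} (h : G.IsExactAlliance S k) :
    S.Nonempty := ((conn_iff).1 h.1).1

lemma IsExactAlliance.unique_k {S : Finset V} {k k' : ℤ} (h : G.IsExactAlliance S k)
    (h' : G.IsExactAlliance S k') : k = k' := by
  obtain ⟨v, hv, hveq⟩ := h.2.2
  obtain ⟨w, hw, hweq⟩ := h'.2.2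
  have h1 := h.2.1 w hw
  have h2 := h'.2.1 v hv
  omega

lemma conn_singleton (v : V) : (G.induce (({v} : Finset V) : Set V)).Connected := by
  rw [conn_iff]
  refine ⟨⟨v, Finset.mem_singleton_self v⟩, ?_⟩
  intro a ha b hb
  rw [Finset.mem_singleton] at ha hb
  subst ha; subst hb; exact RW.refl

lemma degIn_singleton (v : V) : G.degIn {v} v = 0 := by
  rw [SimpleGraph.degIn, Finset.filter_singleton, if_neg (G.irrefl), Finset.card_empty]

lemma degOut_singleton (v : V) : G.degOut {v} v = G.degree v := by
  have := degIn_add_degOut (G := G) {v} v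
  rw [degIn_singleton] at this
  omega

lemma alliance_singleton {v : V} {k : ℤ} :
    G.IsExactAlliance {v} k ↔ k = -(G.degree v : ℤ) := by
  constructor
  · rintro ⟨-, -, w, hw, hweq⟩
    rw [Finset.mem_singleton] at hw
    subst hw
    rw [degIn_singleton, degOut_singleton] at hweq
    omega
  · rintro rfl
    refine ⟨conn_singleton v, ?_, ⟨v, Finset.mem_singleton_self v, ?_⟩⟩ <;>
      simp [degIn_singleton, degOut_singleton]

lemma one_le_degIn_of_card_two {S : Finset V} {v : V}
    (h : (G.induce (S : Set V)).Connected) (hcard : 2 ≤ S.card) (hv : v ∈ S) :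
    1 ≤ G.degIn S v := by
  obtain ⟨u, hu, hne⟩ := Finset.exists_mem_ne (s := S) (by omega) v
  have hrw : G.RW S v u := ((conn_iff).1 h).2 v hv u hu
  rcases Relation.ReflTransGen.cases_head hrw with heq | ⟨c, hstep, -⟩
  · exact absurd heq.symm hne
  · have : c ∈ S.filter (fun u => G.Adj v u) := Finset.mem_filter.2 ⟨hstep.2.1, hstep.2.2⟩
    exact Finset.card_pos.2 ⟨c, this⟩

end SimpleGraph

namespace SimpleGraph

variable {V : Type*} [Fintype V] [DecidableEq V] {G : SimpleGraph V} [DecidableRel G.Adj]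

attribute [local instance] Classical.propDecidable

lemma allianceCoeff_eq_card (k : ℤ) :
    G.allianceCoeff k
      = (Finset.univ.filter (fun S : Finset V => G.IsExactAlliance S k)).card := by
  rw [SimpleGraph.allianceCoeff]
  have h : {S : Finset V | G.IsExactAlliance S k}
      = ↑(Finset.univ.filter (fun S : Finset V => G.IsExactAlliance S k)) := by
    ext S; simp
  rw [h, Set.ncard_coe_finset]

lemma degIn_le_degree (S : Finset V) (v : V) : G.degIn S v ≤ G.degree v := by
  have := degIn_add_degOut (G := G) S v; omega

lemma IsExactAlliance.k_le {S : Finset V} {k : ℤ} (h : G.IsExactAlliance S k) :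
    k ≤ (G.maxDegree : ℤ) := by
  obtain ⟨v, hv, heq⟩ := h.2.2
  have h1 : G.degIn S v ≤ G.degree v := degIn_le_degree S v
  have h2 := G.degree_le_maxDegree v
  omega

lemma IsExactAlliance.le_k {S : Finset V} {k : ℤ} (h : G.IsExactAlliance S k) :
    -(G.maxDegree : ℤ) ≤ k := by
  obtain ⟨v, hv, heq⟩ := h.2.2
  have h1 := degIn_add_degOut (G := G) S v
  have h2 := G.degree_le_maxDegree v
  omega

lemma IsExactAlliance.le_k_two {S : Finset V} {k : ℤ} (h : G.IsExactAlliance S k)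
    (hcard : 2 ≤ S.card) : 2 - (G.maxDegree : ℤ) ≤ k := by
  obtain ⟨v, hv, heq⟩ := h.2.2
  have h1 := degIn_add_degOut (G := G) S v
  have h2 := G.degree_le_maxDegree v
  have h3 := one_le_degIn_of_card_two h.1 hcard hv
  omega

lemma allianceCoeff_eq_zero_of_gt {k : ℤ} (hk : (G.maxDegree : ℤ) < k) :
    G.allianceCoeff k = 0 := by
  rw [allianceCoeff_eq_card, Finset.card_eq_zero, Finset.filter_eq_empty_iff]
  intro S _ hS
  exact absurd hS.k_le (by omega)

lemma allianceCoeff_eq_zero_of_lt {k : ℤ} (hk : k < -(G.maxDegree : ℤ)) :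
    G.allianceCoeff k = 0 := by
  rw [allianceCoeff_eq_card, Finset.card_eq_zero, Finset.filter_eq_empty_iff]
  intro S _ hS
  exact absurd hS.le_k (by omega)

/-- Alliances at the minimum value `-Δ` are exactly the singletons on maximum-degree
vertices. -/
lemma alliance_negMax_iff {S : Finset V} :
    G.IsExactAlliance S (-(G.maxDegree : ℤ))
      ↔ ∃ v, S = {v} ∧ G.degree v = G.maxDegree := by
  constructor
  · intro h
    have hne := h.nonempty
    rcases Nat.lt_or_ge S.card 2 with hcard | hcard
    · have h1 : S.card = 1 := by
        have := Finset.card_pos.2 hne; omega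
      obtain ⟨v, rfl⟩ := Finset.card_eq_one.1 h1
      have := alliance_singleton.1 h
      have h2 := G.degree_le_maxDegree v
      exact ⟨v, rfl, by omega⟩
    · have h2 := h.le_k_two hcard
      have h3 : 1 ≤ (G.maxDegree : ℤ) := by
        -- from 2 - maxDegree ≤ -maxDegree
        omega
      omega
  · rintro ⟨v, rfl, hdeg⟩
    rw [alliance_singleton, hdeg]

lemma allianceCoeff_negMax :
    G.allianceCoeff (-(G.maxDegree : ℤ))
      = (Finset.univ.filter (fun v => G.degree v = G.maxDegree)).card := by
  rw [allianceCoeff_eq_card]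
  have himg : Finset.univ.filter
        (fun S : Finset V => G.IsExactAlliance S (-(G.maxDegree : ℤ)))
      = (Finset.univ.filter (fun v => G.degree v = G.maxDegree)).image
          (fun v => ({v} : Finset V)) := by
    ext S
    simp only [Finset.mem_filter, Finset.mem_image, Finset.mem_univ, true_and]
    constructor
    · intro h
      obtain ⟨v, rfl, hd⟩ := alliance_negMax_iff.1 h
      exact ⟨v, hd, rfl⟩
    · rintro ⟨v, hd, rfl⟩
      exact alliance_negMax_iff.2 ⟨v, rfl, hd⟩
  rw [himg, Finset.card_image_of_injective _ Finset.singleton_injective]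

lemma maxDegree_regular [Nonempty V] {d : ℕ} (hreg : G.IsRegularOfDegree d) :
    G.maxDegree = d := by
  obtain ⟨v, hv⟩ := G.exists_maximal_degree_vertex
  rw [hv, hreg v]

/-- The whole vertex set is closed + connected ⇒ it contains everything. -/
lemma eq_univ_of_closed (hconn : G.Connected) {S : Finset V} (hne : S.Nonempty)
    (hcl : ∀ x ∈ S, ∀ y, G.Adj x y → y ∈ S) : S = Finset.univ := by
  obtain ⟨v₀, hv₀⟩ := hne
  have key : ∀ {a b : V}, G.Walk a b → a ∈ S → b ∈ S := by
    intro a b w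
    induction w with
    | nil => exact id
    | cons h p ih => intro ha; exact ih (hcl _ ha _ h)
  apply Finset.eq_univ_of_forall
  intro u
  obtain ⟨w⟩ := hconn.preconnected v₀ u
  exact key w hv₀

lemma degIn_univ (v : V) : G.degIn Finset.univ v = G.degree v := by
  have h := degIn_add_degOut (G := G) Finset.univ v
  have h2 : G.degOut Finset.univ v = 0 := by
    rw [SimpleGraph.degOut, Finset.compl_univ, Finset.filter_empty, Finset.card_empty]
  omega

lemma degOut_univ (v : V) : G.degOut Finset.univ v = 0 := by
  rw [SimpleGraph.degOut, Finset.compl_univ, Finset.filter_empty, Finset.card_empty]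

lemma rw_univ_of_walk : ∀ {a b : V}, G.Walk a b → G.RW Finset.univ a b := by
  intro a b w
  induction w with
  | nil => exact RW.refl
  | @cons x y z h p ih =>
      exact Relation.ReflTransGen.head ⟨Finset.mem_univ x, Finset.mem_univ y, h⟩ ih

lemma conn_univ (hconn : G.Connected) :
    (G.induce ((Finset.univ : Finset V) : Set V)).Connected := by
  rw [conn_iff]
  obtain ⟨v⟩ := hconn.nonempty
  refine ⟨⟨v, Finset.mem_univ v⟩, ?_⟩
  intro a _ b _
  obtain ⟨w⟩ := hconn.preconnected a b
  exact rw_univ_of_walk w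

/-- For a connected `Δ`-regular graph, the unique alliance with `k = Δ` is the whole
vertex set; so the top alliance coefficient is 1. -/
lemma allianceCoeff_top_regular {d : ℕ} (hreg : G.IsRegularOfDegree d)
    (hconn : G.Connected) : G.allianceCoeff (d : ℤ) = 1 := by
  have hne : Nonempty V := hconn.nonempty
  rw [allianceCoeff_eq_card]
  rw [Finset.card_eq_one]
  refine ⟨Finset.univ, ?_⟩
  apply Finset.eq_singleton_iff_unique_mem.2
  constructor
  · rw [Finset.mem_filter]
    refine ⟨Finset.mem_univ _, conn_univ hconn, ?_, ?_⟩
    · intro v _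
      rw [degIn_univ, degOut_univ, hreg v]; omega
    · obtain ⟨v⟩ := hne
      exact ⟨v, Finset.mem_univ v, by rw [degIn_univ, degOut_univ, hreg v]; omega⟩
  · intro S hS
    rw [Finset.mem_filter] at hS
    obtain ⟨-, hS⟩ := hS
    -- every vertex of S has all its neighbours in S
    have hcl : ∀ x ∈ S, ∀ y, G.Adj x y → y ∈ S := by
      intro x hx y hxy
      have h1 := hS.2.1 x hx
      have h2 := degIn_add_degOut (G := G) S x
      have h3 : G.degIn S x ≤ G.degree x := degIn_le_degree S x
      rw [hreg x] at h2 h3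
      have h4 : G.degOut S x = 0 := by omega
      by_contra hy
      have : y ∈ Sᶜ.filter (fun u => G.Adj x u) :=
        Finset.mem_filter.2 ⟨Finset.mem_compl.2 hy, hxy⟩
      rw [SimpleGraph.degOut] at h4
      rw [Finset.card_eq_zero] at h4
      rw [h4] at this
      exact absurd this (Finset.notMem_empty y)
    exact eq_univ_of_closed hconn hS.nonempty hcl

/-- Parity: every alliance value of a `d`-regular graph is congruent to `d` mod 2. -/
lemma alliance_parity_regular {d : ℕ} (hreg : G.IsRegularOfDegree d) {S : Finset V} {k : ℤ}
    (h : G.IsExactAlliance S k) : (k + d) % 2 = 0 := by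
  obtain ⟨v, hv, heq⟩ := h.2.2
  have h1 := degIn_add_degOut (G := G) S v
  rw [hreg v] at h1
  omega

lemma allianceCoeff_parity_regular {d : ℕ} (hreg : G.IsRegularOfDegree d) {k : ℤ}
    (hk : (k + d) % 2 ≠ 0) : G.allianceCoeff k = 0 := by
  rw [allianceCoeff_eq_card, Finset.card_eq_zero, Finset.filter_eq_empty_iff]
  intro S _ hS
  exact hk (alliance_parity_regular hreg hS)

end SimpleGraph

namespace SimpleGraph

variable {V : Type*} [Fintype V] [DecidableEq V] {G : SimpleGraph V} [DecidableRel G.Adj]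

attribute [local instance] Classical.propDecidable

lemma alliancePoly_coeff [Nonempty V] (m : ℕ) :
    (G.alliancePoly).coeff m = (G.allianceCoeff ((m : ℤ) - Fintype.card V) : ℝ) := by
  have hD : G.maxDegree < Fintype.card V := G.maxDegree_lt_card_verts
  rw [SimpleGraph.alliancePoly, Polynomial.finset_sum_coeff]
  simp only [Polynomial.coeff_smul, Polynomial.coeff_X_pow, smul_eq_mul]
  by_cases hm : ((m : ℤ) - Fintype.card V) ∈ Finset.Icc (-(G.maxDegree : ℤ)) (G.maxDegree : ℤ)
  · rw [Finset.sum_eq_single ((m : ℤ) - Fintype.card V)]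
    · rw [if_pos (by rw [Finset.mem_Icc] at hm; omega), mul_one]
    · intro k hk hne
      rw [Finset.mem_Icc] at hk
      rw [if_neg (by omega), mul_zero]
    · intro h
      exact absurd hm h
  · have hz : G.allianceCoeff ((m : ℤ) - Fintype.card V) = 0 := by
      rw [Finset.mem_Icc] at hm
      rcases not_and_or.1 hm with h | h
      · exact allianceCoeff_eq_zero_of_lt (by omega)
      · exact allianceCoeff_eq_zero_of_gt (by omega)
    rw [hz]
    push_cast
    apply Finset.sum_eq_zero
    intro k hk
    rw [Finset.mem_Icc] at hk
    rw [if_neg (by rw [Finset.mem_Icc] at hm; omega), mul_zero]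

/-- From equality of alliance polynomials, equality of all alliance coefficients,
suitably shifted. -/
lemma allianceCoeff_transfer {W : Type*} [Fintype W] [DecidableEq W]
    {H : SimpleGraph W} [DecidableRel H.Adj] [Nonempty V] [Nonempty W]
    (h : H.alliancePoly = G.alliancePoly) (k : ℤ) :
    H.allianceCoeff k = G.allianceCoeff (k + (Fintype.card W - Fintype.card V : ℤ)) := by
  have hΔV : (G.maxDegree : ℤ) < Fintype.card V := by
    exact_mod_cast G.maxDegree_lt_card_verts
  have hΔW : (H.maxDegree : ℤ) < Fintype.card W := by
    exact_mod_cast H.maxDegree_lt_card_verts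
  rcases le_or_gt 0 ((Fintype.card W : ℤ) + k) with hk | hk
  · have hm := congrArg (fun p => Polynomial.coeff p ((Fintype.card W : ℤ) + k).toNat) h
    rw [alliancePoly_coeff, alliancePoly_coeff] at hm
    have h1 : ((((Fintype.card W : ℤ) + k).toNat : ℤ) - Fintype.card W) = k := by omega
    have h2 : ((((Fintype.card W : ℤ) + k).toNat : ℤ) - Fintype.card V)
        = k + (Fintype.card W - Fintype.card V : ℤ) := by omega
    rw [h1, h2] at hm
    exact_mod_cast hm
  · rw [allianceCoeff_eq_zero_of_lt (G := H) (by omega),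
      allianceCoeff_eq_zero_of_lt (G := G) (by omega)]

/-- The sum of all alliance coefficients equals the number of connected sets. -/
lemma sum_allianceCoeff :
    ∑ k ∈ Finset.Icc (-(G.maxDegree : ℤ)) (G.maxDegree : ℤ), G.allianceCoeff k
      = (Finset.univ.filter
          (fun S : Finset V => (G.induce (S : Set V)).Connected)).card := by
  have hdisj : ∀ k₁ ∈ Finset.Icc (-(G.maxDegree : ℤ)) (G.maxDegree : ℤ),
      ∀ k₂ ∈ Finset.Icc (-(G.maxDegree : ℤ)) (G.maxDegree : ℤ), k₁ ≠ k₂ →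
      Disjoint (Finset.univ.filter (fun S : Finset V => G.IsExactAlliance S k₁))
        (Finset.univ.filter (fun S : Finset V => G.IsExactAlliance S k₂)) := by
    intro k₁ _ k₂ _ hne
    rw [Finset.disjoint_left]
    intro S hS1 hS2
    rw [Finset.mem_filter] at hS1 hS2
    exact hne (hS1.2.unique_k hS2.2)
  have hcup : (Finset.Icc (-(G.maxDegree : ℤ)) (G.maxDegree : ℤ)).biUnion
        (fun k => Finset.univ.filter (fun S : Finset V => G.IsExactAlliance S k))
      = Finset.univ.filter
          (fun S : Finset V => (G.induce (S : Set V)).Connected) := by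
    ext S
    rw [Finset.mem_biUnion, Finset.mem_filter]
    constructor
    · rintro ⟨k, -, hS⟩
      rw [Finset.mem_filter] at hS
      exact ⟨Finset.mem_univ S, hS.2.1⟩
    · rintro ⟨-, hconn⟩
      obtain ⟨k, hk⟩ := exists_alliance_of_conn hconn
      refine ⟨k, ?_, Finset.mem_filter.2 ⟨Finset.mem_univ S, hk⟩⟩
      rw [Finset.mem_Icc]
      exact ⟨hk.le_k, hk.k_le⟩
  calc ∑ k ∈ Finset.Icc (-(G.maxDegree : ℤ)) (G.maxDegree : ℤ), G.allianceCoeff k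
      = ∑ k ∈ Finset.Icc (-(G.maxDegree : ℤ)) (G.maxDegree : ℤ),
          (Finset.univ.filter (fun S : Finset V => G.IsExactAlliance S k)).card := by
        exact Finset.sum_congr rfl (fun k _ => allianceCoeff_eq_card k)
    _ = _ := by rw [← Finset.card_biUnion hdisj, hcup]

lemma card_conn_le :
    (Finset.univ.filter
        (fun S : Finset V => (G.induce (S : Set V)).Connected)).card
      ≤ 2 ^ Fintype.card V - 1 := by
  have hsub : Finset.univ.filter
        (fun S : Finset V => (G.induce (S : Set V)).Connected)
      ⊆ Finset.univ.erase (∅ : Finset V) := by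
    intro S hS
    rw [Finset.mem_filter] at hS
    rw [Finset.mem_erase]
    refine ⟨?_, Finset.mem_univ S⟩
    intro heq
    obtain ⟨x, hx⟩ := ((conn_iff).1 hS.2).1
    rw [heq] at hx
    exact absurd hx (Finset.notMem_empty x)
  calc _ ≤ (Finset.univ.erase (∅ : Finset V)).card := Finset.card_le_card hsub
    _ = Fintype.card (Finset V) - 1 := by
        rw [Finset.card_erase_of_mem (Finset.mem_univ _), Finset.card_univ]
    _ = 2 ^ Fintype.card V - 1 := by rw [Fintype.card_finset]

end SimpleGraph

namespace SimpleGraph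

variable {V : Type*} [Fintype V] [DecidableEq V] {G : SimpleGraph V} [DecidableRel G.Adj]

attribute [local instance] Classical.propDecidable

lemma degOut_eq (S : Finset V) (v : V) : G.degOut S v = G.degree v - G.degIn S v := by
  have := degIn_add_degOut (G := G) S v; omega

lemma degIn_mono {S T : Finset V} (hST : S ⊆ T) (v : V) : G.degIn S v ≤ G.degIn T v :=
  Finset.card_le_card (Finset.filter_subset_filter _ hST)

lemma degIn_erase_ge {T : Finset V} (u v : V) :
    G.degIn T v ≤ G.degIn (T.erase u) v + 1 := by
  unfold SimpleGraph.degIn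
  have h : (T.erase u).filter (fun x => G.Adj v x) = (T.filter (fun x => G.Adj v x)).erase u := by
    ext x
    simp only [Finset.mem_filter, Finset.mem_erase]
    tauto
  rw [h]
  have := Finset.pred_card_le_card_erase (a := u) (s := T.filter (fun x => G.Adj v x))
  omega

lemma adj_of_degIn_lt {T : Finset V} {u v : V}
    (h : G.degIn (T.erase u) v < G.degIn T v) : G.Adj v u := by
  by_contra hadj
  have h2 : (T.erase u).filter (fun x => G.Adj v x) = T.filter (fun x => G.Adj v x) := by
    ext x
    simp only [Finset.mem_filter, Finset.mem_erase]
    constructor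
    · tauto
    · rintro ⟨hx, hvx⟩
      exact ⟨⟨fun hxu => hadj (hxu ▸ hvx), hx⟩, hvx⟩
  unfold SimpleGraph.degIn at h
  rw [h2] at h
  omega

/-- Each component of the induced graph on `T` is an exact alliance, whose value is
expressed via `degIn T`. -/
lemma comp_alliance {T : Finset V} {x : V} (hx : x ∈ T) :
    ∃ (k : ℤ) (y : V), G.IsExactAlliance (G.comp T x) k ∧ y ∈ G.comp T x ∧
      k = 2 * (G.degIn T y : ℤ) - G.degree y ∧
      (∀ z ∈ G.comp T x, k ≤ 2 * (G.degIn T z : ℤ) - G.degree z) := by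
  have hterm : ∀ z ∈ G.comp T x,
      (G.degIn (G.comp T x) z : ℤ) - G.degOut (G.comp T x) z
        = 2 * (G.degIn T z : ℤ) - G.degree z := by
    intro z hz
    have h1 := degIn_comp (G := G) hz
    have h2 := degIn_add_degOut (G := G) (G.comp T x) z
    omega
  obtain ⟨k, hk⟩ := exists_alliance_of_conn (G := G) (conn_comp hx)
  obtain ⟨y, hy, hyeq⟩ := hk.2.2
  refine ⟨k, y, hk, hy, ?_, ?_⟩
  · rw [← hterm y hy]; omega
  · intro z hz
    have := hk.2.1 z hz
    rw [hterm z hz] at this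
    exact this

/-- A set containing an adjacent dominating pair is connected. -/
lemma conn_of_dominating_pair {v1 v2 : V} (h12 : G.Adj v1 v2)
    (hdom : ∀ x, x ≠ v1 → x ≠ v2 → G.Adj v1 x ∨ G.Adj v2 x)
    {S : Finset V} (h1 : v1 ∈ S) (h2 : v2 ∈ S) :
    (G.induce (S : Set V)).Connected := by
  rw [conn_iff]
  refine ⟨⟨v1, h1⟩, ?_⟩
  have key : ∀ x ∈ S, G.RW S x v1 := by
    intro x hx
    rcases eq_or_ne x v1 with rfl | hxv1
    · exact RW.refl
    rcases eq_or_ne x v2 with rfl | hxv2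
    · exact Relation.ReflTransGen.single ⟨h2, h1, h12.symm⟩
    rcases hdom x hxv1 hxv2 with hadj | hadj
    · exact Relation.ReflTransGen.single ⟨hx, h1, hadj.symm⟩
    · exact (Relation.ReflTransGen.single ⟨hx, h2, hadj.symm⟩).trans
        (Relation.ReflTransGen.single ⟨h2, h1, h12.symm⟩)
  intro a ha b hb
  exact (key a ha).trans (key b hb).symm

/-- Counting subsets of `Ω` containing a fixed subset `R`. -/
lemma card_filter_subset_mem (Ω R : Finset V) (hR : R ⊆ Ω) :
    (Finset.univ.filter (fun S : Finset V => S ⊆ Ω ∧ R ⊆ S)).card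
      = 2 ^ (Ω.card - R.card) := by
  rw [← Finset.card_sdiff_of_subset hR, ← Finset.card_powerset]
  apply Finset.card_bij' (fun S _ => S \ R) (fun A _ => A ∪ R)
  · intro S hS
    rw [Finset.mem_filter] at hS
    rw [Finset.mem_powerset]
    exact Finset.sdiff_subset_sdiff hS.2.1 (le_refl R)
  · intro A hA
    rw [Finset.mem_powerset] at hA
    rw [Finset.mem_filter]
    refine ⟨Finset.mem_univ _, Finset.union_subset (hA.trans Finset.sdiff_subset) hR,
      Finset.subset_union_right⟩
  · intro S hS
    rw [Finset.mem_filter] at hS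
    exact Finset.sdiff_union_of_subset hS.2.2
  · intro A hA
    rw [Finset.mem_powerset] at hA
    have hdisj : Disjoint A R := by
      refine Finset.disjoint_left.2 ?_
      intro a haA haR
      exact (Finset.mem_sdiff.1 (hA haA)).2 haR
    rw [Finset.union_sdiff_cancel_right hdisj]

/-- Removing a leaf vertex `w` (whose only possible neighbours are `v1 ∈ S` and
`v2 ∉ S`) preserves connectivity, in both directions. -/
lemma rw_avoid_leaf {w v1 : V} {S : Finset V}
    (hnbrs : ∀ x ∈ S, G.Adj w x → x = v1) (hwv1 : w ≠ v1) :
    ∀ {a b : V}, G.RW S a b → a ≠ w →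
      G.RW (S.erase w) a (if b = w then v1 else b) := by
  intro a b h
  induction h with
  | refl => intro ha; rw [if_neg ha]; exact RW.refl
  | @tail c b hac hstep ih =>
      intro ha
      rcases eq_or_ne b w with rfl | hbw
      · rw [if_pos rfl]
        have hcv1 : c = v1 := hnbrs c hstep.1 hstep.2.2.symm
        have hcw : c ≠ b := by rw [hcv1]; exact fun h => hwv1 h.symm
        have h' := ih ha
        rw [if_neg hcw] at h'
        rwa [hcv1] at h'
      · rw [if_neg hbw]
        rcases eq_or_ne c w with rfl | hcw
        · have hbv1 : b = v1 := hnbrs b hstep.2.1 hstep.2.2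
          have h' := ih ha
          rw [if_pos rfl] at h'
          rwa [← hbv1] at h'
        · have h' := ih ha
          rw [if_neg hcw] at h'
          exact h'.tail ⟨Finset.mem_erase.2 ⟨hcw, hstep.1⟩,
            Finset.mem_erase.2 ⟨hbw, hstep.2.1⟩, hstep.2.2⟩

lemma conn_toggle_leaf {w v1 v2 : V} (hw1 : G.Adj w v1)
    (hnbrsglob : ∀ x, G.Adj w x → x = v1 ∨ x = v2)
    {S : Finset V} (hv1 : v1 ∈ S) (hv2 : v2 ∉ S) (hwS : w ∈ S) :
    (G.induce (S : Set V)).Connected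
      ↔ (G.induce ((S.erase w : Finset V) : Set V)).Connected := by
  have hwv1 : w ≠ v1 := hw1.ne
  have hnbrs : ∀ x ∈ S, G.Adj w x → x = v1 := by
    intro x hx hadj
    rcases hnbrsglob x hadj with h | h
    · exact h
    · exact absurd (h ▸ hx) hv2
  constructor
  · intro h
    rw [conn_iff] at h ⊢
    refine ⟨⟨v1, Finset.mem_erase.2 ⟨hwv1.symm, hv1⟩⟩, ?_⟩
    intro a ha b hb
    rw [Finset.mem_erase] at ha hb
    have := rw_avoid_leaf hnbrs hwv1 (h.2 a ha.2 b hb.2) ha.1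
    rwa [if_neg hb.1] at this
  · intro h
    rw [conn_iff] at h ⊢
    refine ⟨⟨v1, hv1⟩, ?_⟩
    have key : ∀ x ∈ S, G.RW S x v1 := by
      intro x hx
      rcases eq_or_ne x w with rfl | hxw
      · exact Relation.ReflTransGen.single ⟨hwS, hv1, hw1⟩
      · exact (h.2 x (Finset.mem_erase.2 ⟨hxw, hx⟩) v1
          (Finset.mem_erase.2 ⟨hwv1.symm, hv1⟩)).mono (Finset.erase_subset _ _)
    intro a ha b hb
    exact (key a ha).trans (key b hb).symm

/-- The key counting bound on disconnected subsets. -/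
lemma disconnected_count_le {Ω : Finset V} {v1 : V} (Z1 : Finset V)
    (hZ1 : ∀ b ∈ Ω, b ≠ v1 → ¬ G.Adj v1 b → b ∈ Z1)
    (P : V → Finset V)
    (hP : ∀ b0 ∈ Z1, ∀ x ∈ Ω, x ≠ v1 → x ≠ b0 → ¬ G.Adj b0 x → x ∈ P b0) :
    (Finset.univ.filter (fun S : Finset V => S ⊆ Ω ∧ v1 ∈ S ∧
        ¬ (G.induce (S : Set V)).Connected)).card
      ≤ ∑ b0 ∈ Z1, 2 ^ (P b0).card * 2 ^ (Z1.erase b0).card := by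
  classical
  set 𝒟 := Finset.univ.filter (fun S : Finset V => S ⊆ Ω ∧ v1 ∈ S ∧
      ¬ (G.induce (S : Set V)).Connected) with h𝒟
  -- every disconnected S has a vertex outside the component of v1
  have hwitness : ∀ S ∈ 𝒟, ∃ b0 ∈ Z1, b0 ∈ S ∧ b0 ∉ G.comp S v1 := by
    intro S hS
    rw [h𝒟, Finset.mem_filter] at hS
    obtain ⟨-, hSΩ, hv1S, hnconn⟩ := hS
    have hBne : (S \ G.comp S v1).Nonempty := by
      rw [Finset.sdiff_nonempty]
      intro hsub
      have heq : G.comp S v1 = S := Finset.Subset.antisymm comp_subset hsub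
      exact hnconn (heq ▸ conn_comp hv1S)
    obtain ⟨b0, hb0⟩ := hBne
    rw [Finset.mem_sdiff] at hb0
    refine ⟨b0, hZ1 b0 (hSΩ hb0.1) ?_ ?_, hb0.1, hb0.2⟩
    · intro h
      apply hb0.2
      rw [h]
      exact self_mem_comp hv1S
    · intro hadj
      exact hb0.2 (comp_closed (self_mem_comp hv1S) hb0.1 hadj)
  have hcover : 𝒟 ⊆ Z1.biUnion (fun b0 => 𝒟.filter (fun S => b0 ∈ S ∧ b0 ∉ G.comp S v1)) := by
    intro S hS
    obtain ⟨b0, hb0Z, hb0S, hb0K⟩ := hwitness S hS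
    exact Finset.mem_biUnion.2 ⟨b0, hb0Z, Finset.mem_filter.2 ⟨hS, hb0S, hb0K⟩⟩
  refine (Finset.card_le_card hcover).trans ((Finset.card_biUnion_le).trans ?_)
  apply Finset.sum_le_sum
  intro b0 hb0Z
  -- injection into the product of two powersets
  rw [← Finset.card_powerset, ← Finset.card_powerset, ← Finset.card_product]
  apply Finset.card_le_card_of_injOn
    (fun S => ((G.comp S v1).erase v1, (S \ G.comp S v1).erase b0))
  · intro S hS
    rw [Finset.mem_coe, Finset.mem_filter] at hS
    obtain ⟨hS𝒟, hb0S, hb0K⟩ := hS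
    rw [h𝒟, Finset.mem_filter] at hS𝒟
    obtain ⟨-, hSΩ, hv1S, -⟩ := hS𝒟
    simp only [Finset.mem_coe, Finset.mem_product, Finset.mem_powerset]
    constructor
    · -- (comp S v1).erase v1 ⊆ P b0
      intro x hx
      rw [Finset.mem_erase] at hx
      obtain ⟨hxv1, hxK⟩ := hx
      have hxS : x ∈ S := comp_subset hxK
      refine hP b0 hb0Z x (hSΩ hxS) hxv1 ?_ ?_
      · intro h
        apply hb0K
        rw [h] at hxK
        exact hxK
      · intro hadj
        exact hb0K (comp_closed hxK hb0S hadj.symm)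
    · -- (S \ comp S v1).erase b0 ⊆ Z1.erase b0
      intro x hx
      rw [Finset.mem_erase, Finset.mem_sdiff] at hx
      obtain ⟨hxb0, hxS, hxK⟩ := hx
      rw [Finset.mem_erase]
      refine ⟨hxb0, hZ1 x (hSΩ hxS) ?_ ?_⟩
      · intro h
        apply hxK
        rw [h]
        exact self_mem_comp hv1S
      · intro hadj
        exact hxK (comp_closed (self_mem_comp hv1S) hxS hadj)
  · -- injectivity
    intro S hS T hT heq
    simp only [Finset.coe_filter, Set.mem_setOf_eq] at hS hT
    obtain ⟨hS𝒟, hb0S, hb0KS⟩ := hS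
    obtain ⟨hT𝒟, hb0T, hb0KT⟩ := hT
    rw [h𝒟, Finset.mem_filter] at hS𝒟 hT𝒟
    have hv1S : v1 ∈ S := hS𝒟.2.2.1
    have hv1T : v1 ∈ T := hT𝒟.2.2.1
    have h1 : (G.comp S v1).erase v1 = (G.comp T v1).erase v1 := congrArg Prod.fst heq
    have h2 : (S \ G.comp S v1).erase b0 = (T \ G.comp T v1).erase b0 :=
      congrArg Prod.snd heq
    have hK : G.comp S v1 = G.comp T v1 := by
      have := congrArg (insert v1) h1
      rwa [Finset.insert_erase (self_mem_comp hv1S),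
        Finset.insert_erase (self_mem_comp hv1T)] at this
    have hB : S \ G.comp S v1 = T \ G.comp T v1 := by
      have := congrArg (insert b0) h2
      rwa [Finset.insert_erase (Finset.mem_sdiff.2 ⟨hb0S, hb0KS⟩),
        Finset.insert_erase (Finset.mem_sdiff.2 ⟨hb0T, hb0KT⟩)] at this
    have hu1 : G.comp S v1 ∪ (S \ G.comp S v1) = S :=
      Finset.union_sdiff_of_subset comp_subset
    have hu2 : G.comp T v1 ∪ (T \ G.comp T v1) = T :=
      Finset.union_sdiff_of_subset comp_subset
    rw [← hu1, hB, hK, hu2]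

end SimpleGraph


open SimpleGraph in
/-- If `G` is a connected Δ-regular graph with `Δ ≤ 5` and `G*` has the same
alliance polynomial, then `G*` is Δ-regular with the same order and size as `G`. -/
theorem alliancePoly_determines_connected_regular_degree_le_five
    {V W : Type*} [Fintype V] [DecidableEq V] [Fintype W] [DecidableEq W]
    (G : SimpleGraph V) [DecidableRel G.Adj] (Δ : ℕ) (hΔ : Δ ≤ 5)
    (hreg : G.IsRegularOfDegree Δ) (hconn : G.Connected)
    (Gs : SimpleGraph W) [DecidableRel Gs.Adj]
    (h : Gs.alliancePoly = G.alliancePoly) :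
    Gs.IsRegularOfDegree Δ ∧
    Fintype.card W = Fintype.card V ∧
    Gs.edgeFinset.card = G.edgeFinset.card := by
  classical
  have hVne : Nonempty V := hconn.nonempty
  have hmaxG : G.maxDegree = Δ := maxDegree_regular hreg
  set n := Fintype.card V with hn
  have hnpos : 0 < n := Fintype.card_pos
  have hΔn : Δ < n := by rw [← hmaxG]; exact G.maxDegree_lt_card_verts
  have hGneg : G.allianceCoeff (-(Δ : ℤ)) = n := by
    have h1 : (Finset.univ.filter (fun v => G.degree v = G.maxDegree)) = Finset.univ := by
      apply Finset.filter_true_of_mem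
      intro v _
      rw [hreg v, hmaxG]
    have h2 := allianceCoeff_negMax (G := G)
    rw [h1, Finset.card_univ, hmaxG] at h2
    exact h2
  -- W is nonempty
  have hWne : Nonempty W := by
    by_contra hW
    have hWempty : ∀ k : ℤ, Gs.allianceCoeff k = 0 := by
      intro k
      rw [allianceCoeff_eq_card, Finset.card_eq_zero, Finset.filter_eq_empty_iff]
      intro S _ hS
      obtain ⟨x, -⟩ := hS.nonempty
      exact hW ⟨x⟩
    have hpoly0 : Gs.alliancePoly = 0 := by
      rw [SimpleGraph.alliancePoly]
      apply Finset.sum_eq_zero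
      intro k _
      rw [hWempty k]
      simp
    have hcoeff := congrArg (fun q => Polynomial.coeff q (n - Δ)) h
    rw [hpoly0, Polynomial.coeff_zero, alliancePoly_coeff] at hcoeff
    have harg : ((n - Δ : ℕ) : ℤ) - Fintype.card V = -(Δ : ℤ) := by
      rw [← hn]; omega
    rw [harg, hGneg] at hcoeff
    have : (n : ℝ) ≠ 0 := Nat.cast_ne_zero.2 (by omega)
    exact this hcoeff.symm
  set p := Fintype.card W with hp
  set D := Gs.maxDegree with hD
  have φ : ∀ k : ℤ, Gs.allianceCoeff k = G.allianceCoeff (k + ((p : ℤ) - n)) :=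
    fun k => allianceCoeff_transfer h k
  set s : ℤ := (p : ℤ) - n with hs
  have hΔDG : ∀ {j : ℤ}, G.allianceCoeff j ≠ 0 →
      -(Δ : ℤ) ≤ j ∧ j ≤ (Δ : ℤ) ∧ (j + Δ) % 2 = 0 := by
    intro j hj
    refine ⟨?_, ?_, ?_⟩
    · by_contra hlt
      exact hj (allianceCoeff_eq_zero_of_lt (by rw [hmaxG]; omega))
    · by_contra hlt
      exact hj (allianceCoeff_eq_zero_of_gt (by rw [hmaxG]; omega))
    · by_contra hpar
      exact hj (allianceCoeff_parity_regular hreg hpar)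
  obtain ⟨vD, hvD⟩ := Gs.exists_maximal_degree_vertex
  have hGsneg : Gs.allianceCoeff (-(D : ℤ))
      = (Finset.univ.filter (fun v => Gs.degree v = D)).card := allianceCoeff_negMax
  have hGsnegpos : Gs.allianceCoeff (-(D : ℤ)) ≠ 0 := by
    rw [hGsneg]
    apply Finset.card_ne_zero_of_mem (a := vD)
    exact Finset.mem_filter.2 ⟨Finset.mem_univ vD, hvD.symm⟩
  have hsD : s = (D : ℤ) - Δ := by
    have h1 := (hΔDG (by rw [← φ]; exact hGsnegpos)).1
    have h2 : Gs.allianceCoeff (-(Δ : ℤ) - s) ≠ 0 := by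
      rw [φ]
      have harg : -(Δ : ℤ) - s + s = -(Δ : ℤ) := by ring
      rw [harg, hGneg]
      omega
    have h3 : -(D : ℤ) ≤ -(Δ : ℤ) - s := by
      by_contra hlt
      exact h2 (allianceCoeff_eq_zero_of_lt (G := Gs) (by rw [← hD]; omega))
    omega
  have hDcount : (Finset.univ.filter (fun v => Gs.degree v = D)).card = n := by
    rw [← hGsneg, φ]
    have harg : -(D : ℤ) + s = -(Δ : ℤ) := by omega
    rw [harg, hGneg]
  have hnp : n ≤ p := by
    rw [← hDcount]
    calc (Finset.univ.filter (fun v => Gs.degree v = D)).card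
        ≤ (Finset.univ : Finset W).card := Finset.card_le_card (Finset.filter_subset _ _)
      _ = p := Finset.card_univ
  have hs0 : 0 ≤ s := by omega
  rcases eq_or_lt_of_le hs0 with hseq | hspos
  · -- the regular case: s = 0
    have hpn : p = n := by omega
    have hfilter : Finset.univ.filter (fun v => Gs.degree v = D) = Finset.univ := by
      apply Finset.eq_univ_of_card
      rw [hDcount]
      omega
    have hDΔ : D = Δ := by omega
    have hregs : Gs.IsRegularOfDegree Δ := by
      intro v
      have hv : v ∈ Finset.univ.filter (fun v => Gs.degree v = D) := by
        rw [hfilter]; exact Finset.mem_univ v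
      rw [← hDΔ]
      exact (Finset.mem_filter.1 hv).2
    refine ⟨hregs, hpn, ?_⟩
    have e1 := Gs.sum_degrees_eq_twice_card_edges
    have e2 := G.sum_degrees_eq_twice_card_edges
    rw [Finset.sum_congr rfl (fun v _ => hregs v), Finset.sum_const, smul_eq_mul,
      Finset.card_univ] at e1
    rw [Finset.sum_congr rfl (fun v _ => hreg v), Finset.sum_const, smul_eq_mul,
      Finset.card_univ] at e2
    rw [← hp] at e1
    rw [← hn] at e2
    rw [hpn] at e1
    omega
  · -- the irregular case: s ≥ 1, derive a contradiction
    exfalso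
    -- the set of max-degree and low-degree vertices
    set St := Finset.univ.filter (fun v => Gs.degree v = D) with hSt
    set L := Finset.univ.filter (fun v => ¬ (Gs.degree v = D)) with hL
    have hStL : Stᶜ = L := by
      ext x
      simp [hSt, hL]
    have hStcard : St.card = n := hDcount
    have hsplitc := Finset.card_filter_add_card_filter_not
      (s := (Finset.univ : Finset W)) (p := fun v => Gs.degree v = D)
    rw [Finset.card_univ, ← hp] at hsplitc
    have hLcard : (L.card : ℤ) = s := by
      rw [← hSt, ← hL] at hsplitc
      rw [hs]
      have h1 : St.card + L.card = p := hsplitc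
      omega
    have hLne : L.Nonempty := by
      rw [← Finset.card_pos]
      omega
    have hdegSt : ∀ v ∈ St, Gs.degree v = D := fun v hv => (Finset.mem_filter.1 hv).2
    have hmemSt : ∀ v : W, v ∉ L → v ∈ St := by
      intro v hv
      rcases eq_or_ne (Gs.degree v) D with hd | hd
      · exact Finset.mem_filter.2 ⟨Finset.mem_univ v, hd⟩
      · exact absurd (Finset.mem_filter.2 ⟨Finset.mem_univ v, hd⟩) hv
    -- global bounds on alliances of Gs
    have hGsAll : ∀ {S : Finset W} {k : ℤ}, Gs.IsExactAlliance S k →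
        k ≤ (Δ : ℤ) - s ∧ (k + D) % 2 = 0 := by
      intro S k hSk
      have hne : Gs.allianceCoeff k ≠ 0 := by
        rw [allianceCoeff_eq_card]
        exact Finset.card_ne_zero_of_mem
          (Finset.mem_filter.2 ⟨Finset.mem_univ S, hSk⟩)
      rw [φ] at hne
      obtain ⟨h1', h2', h3'⟩ := hΔDG hne
      omega
    -- the unique top alliance
    have hTop : Gs.allianceCoeff ((Δ : ℤ) - s) = 1 := by
      rw [φ]
      have harg : (Δ : ℤ) - s + s = (Δ : ℤ) := by ring
      rw [harg]
      exact allianceCoeff_top_regular hreg hconn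
    have huniq : ∀ {S T : Finset W}, Gs.IsExactAlliance S ((Δ : ℤ) - s) →
        Gs.IsExactAlliance T ((Δ : ℤ) - s) → S = T := by
      intro S T hS hT
      rw [allianceCoeff_eq_card, Finset.card_eq_one] at hTop
      obtain ⟨A, hA⟩ := hTop
      have h1 : S ∈ Finset.univ.filter
          (fun X : Finset W => Gs.IsExactAlliance X ((Δ : ℤ) - s)) :=
        Finset.mem_filter.2 ⟨Finset.mem_univ S, hS⟩
      have h2 : T ∈ Finset.univ.filter
          (fun X : Finset W => Gs.IsExactAlliance X ((Δ : ℤ) - s)) :=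
        Finset.mem_filter.2 ⟨Finset.mem_univ T, hT⟩
      rw [hA, Finset.mem_singleton] at h1 h2
      rw [h1, h2]
    have hStne : St.Nonempty := by
      rw [← Finset.card_pos, hStcard]; omega
    have hdegOutSt : ∀ v : W, Gs.degOut St v ≤ L.card := by
      intro v
      calc Gs.degOut St v ≤ Stᶜ.card := degOut_le_card v
        _ = L.card := by rw [hStL]
    -- every component of St is the unique top alliance; hence St itself is
    have hcomp : ∀ x, x ∈ St → Gs.IsExactAlliance (Gs.comp St x) ((Δ : ℤ) - s) := by
      intro x hx
      obtain ⟨k, y, hall, hy, hkeq, hmin⟩ := comp_alliance (G := Gs) hx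
      have hySt : y ∈ St := comp_subset hy
      have h1 : Gs.degIn St y + Gs.degOut St y = D := by
        rw [degIn_add_degOut, hdegSt y hySt]
      have h2 : Gs.degOut St y ≤ L.card := hdegOutSt y
      have hk1 : (Δ : ℤ) - s ≤ k := by
        rw [hkeq, hdegSt y hySt]
        omega
      have hk2 := (hGsAll hall).1
      have hkfin : k = (Δ : ℤ) - s := le_antisymm hk2 hk1
      rwa [hkfin] at hall
    have hStAll : Gs.IsExactAlliance St ((Δ : ℤ) - s) := by
      obtain ⟨x0, hx0⟩ := hStne
      have hSteq : St = Gs.comp St x0 := by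
        apply Finset.Subset.antisymm ?_ comp_subset
        intro u hu
        have heq := huniq (hcomp u hu) (hcomp x0 hx0)
        rw [← heq]
        exact self_mem_comp hu
      rw [hSteq]
      exact hcomp x0 hx0
    -- the set F of max-degree vertices adjacent to all of L
    set F := St.filter (fun v => Gs.degOut St v = L.card) with hF
    have hFne : F.Nonempty := by
      obtain ⟨y, hy, hyeq⟩ := hStAll.2.2
      have h1 : Gs.degIn St y + Gs.degOut St y = D := by
        rw [degIn_add_degOut, hdegSt y hy]
      have h2 : Gs.degOut St y = L.card := by omega
      exact ⟨y, Finset.mem_filter.2 ⟨hy, h2⟩⟩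
    have hFadjL : ∀ v ∈ F, ∀ w ∈ L, Gs.Adj v w := by
      intro v hv w hw
      rw [hF, Finset.mem_filter] at hv
      have hfeq : Stᶜ.filter (fun u => Gs.Adj v u) = Stᶜ := by
        apply Finset.eq_of_subset_of_card_le (Finset.filter_subset _ _)
        have : (Stᶜ.filter (fun u => Gs.Adj v u)).card = L.card := hv.2
        rw [this, hStL]
      have hwmem : w ∈ Stᶜ := by rw [hStL]; exact hw
      rw [← hfeq, Finset.mem_filter] at hwmem
      exact hwmem.2
    obtain ⟨v₀, hv₀F⟩ := hFne
    have hv₀St : v₀ ∈ St := (Finset.mem_filter.1 hv₀F).1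
    -- Gs is connected
    have hconnuniv : (Gs.induce ((Finset.univ : Finset W) : Set W)).Connected := by
      rw [conn_iff]
      refine ⟨⟨v₀, Finset.mem_univ v₀⟩, ?_⟩
      have key : ∀ x : W, Gs.RW Finset.univ x v₀ := by
        intro x
        by_cases hx : x ∈ St
        · exact (((conn_iff).1 hStAll.1).2 x hx v₀ hv₀St).mono (Finset.subset_univ St)
        · have hxL : x ∈ L := by
            by_contra hxl
            exact hx (hmemSt x hxl)
          exact Relation.ReflTransGen.single
            ⟨Finset.mem_univ x, Finset.mem_univ v₀, (hFadjL v₀ hv₀F x hxL).symm⟩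
      intro a _ b _
      exact (key a).trans (key b).symm
    -- the full vertex set is an alliance with small value k₀, attained at a low vertex
    obtain ⟨k₀, hk₀⟩ := exists_alliance_of_conn (G := Gs) hconnuniv
    obtain ⟨u₀, -, hu₀eq⟩ := hk₀.2.2
    have hu₀deg : (Gs.degree u₀ : ℤ) = k₀ := by
      rw [degIn_univ, degOut_univ] at hu₀eq
      omega
    have hk₀top := (hGsAll hk₀).1
    have hk₀par := (hGsAll hk₀).2
    have huniv_ne : (Finset.univ : Finset W) ≠ St := by
      obtain ⟨w, hw⟩ := hLne
      intro heq
      have hwSt : w ∈ St := by rw [← heq]; exact Finset.mem_univ w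
      rw [hL, Finset.mem_filter] at hw
      exact hw.2 (hdegSt w hwSt)
    have hk₀ne : k₀ ≠ (Δ : ℤ) - s := by
      intro heq
      rw [heq] at hk₀
      exact huniv_ne (huniq hk₀ hStAll)
    have hk₀le : k₀ ≤ (Δ : ℤ) - s - 2 := by omega
    have hu₀L : u₀ ∈ L := by
      by_contra hL0
      have hu₀St := hmemSt u₀ hL0
      have := hdegSt u₀ hu₀St
      omega
    -- F is contained in the neighbourhood of u₀
    have hFcard : (F.card : ℤ) ≤ k₀ := by
      have hsub : F ⊆ Gs.neighborFinset u₀ := by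
        intro v hv
        rw [SimpleGraph.mem_neighborFinset]
        exact (hFadjL v hv u₀ hu₀L).symm
      have hc := Finset.card_le_card hsub
      rw [SimpleGraph.card_neighborFinset_eq_degree] at hc
      omega
    have hFpos : 1 ≤ F.card := Finset.card_pos.2 ⟨v₀, hv₀F⟩
    have hsmall : s ≤ (Δ : ℤ) - 3 := by omega
    -- domination of St by F
    have hdom : ∀ u ∈ St, ∃ v ∈ F, Gs.Adj v u := by
      intro u hu
      have hT : (St.erase u).Nonempty := by
        rw [← Finset.card_pos, Finset.card_erase_of_mem hu, hStcard]
        omega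
      obtain ⟨x, hx⟩ := hT
      obtain ⟨k₁, y₁, hall1, hy1, hk1eq, hmin1⟩ := comp_alliance (G := Gs) hx
      have hy1T : y₁ ∈ St.erase u := comp_subset hy1
      have hy1St : y₁ ∈ St := (Finset.mem_erase.1 hy1T).2
      have hdi := degIn_erase_ge (G := Gs) (T := St) u y₁
      have hd1 : Gs.degIn St y₁ + Gs.degOut St y₁ = D := by
        rw [degIn_add_degOut, hdegSt y₁ hy1St]
      have hd2 : Gs.degOut St y₁ ≤ L.card := hdegOutSt y₁
      have hdm : Gs.degIn (St.erase u) y₁ ≤ Gs.degIn St y₁ :=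
        degIn_mono (Finset.erase_subset u St) y₁
      have hk1ge : (Δ : ℤ) - s - 2 ≤ k₁ := by
        rw [hk1eq, hdegSt y₁ hy1St]
        omega
      have hk1top := (hGsAll hall1).1
      have hk1par := (hGsAll hall1).2
      have hk1cases : k₁ = (Δ : ℤ) - s - 2 ∨ k₁ = (Δ : ℤ) - s := by omega
      rcases hk1cases with hk1c | hk1c
      · -- extract: y₁ ∈ F and y₁ ~ u
        have hdeq : (Gs.degIn (St.erase u) y₁ : ℤ) = (Δ : ℤ) - 1 := by
          rw [hk1c, hdegSt y₁ hy1St] at hk1eq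
          omega
        have hdSt : (Gs.degIn St y₁ : ℤ) = (Δ : ℤ) := by omega
        have hadj : Gs.Adj y₁ u := by
          apply adj_of_degIn_lt (T := St)
          omega
        have hyF : y₁ ∈ F := by
          rw [hF, Finset.mem_filter]
          refine ⟨hy1St, ?_⟩
          omega
        exact ⟨y₁, hyF, hadj⟩
      · exfalso
        rw [hk1c] at hall1
        have := huniq hall1 hStAll
        have hu1 : u ∈ Gs.comp (St.erase u) x := by rw [this]; exact hu
        have hu2 := comp_subset hu1
        exact (Finset.mem_erase.1 hu2).1 rfl
    -- n ≤ |F| ⬝ Δ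
    have hnF : (n : ℤ) ≤ F.card * Δ := by
      have hcover : St ⊆ F.biUnion (fun v => St.filter (fun u => Gs.Adj v u)) := by
        intro u hu
        obtain ⟨v, hvF, hadj⟩ := hdom u hu
        exact Finset.mem_biUnion.2 ⟨v, hvF, Finset.mem_filter.2 ⟨hu, hadj⟩⟩
      have h1 := Finset.card_le_card hcover
      have h2 := Finset.card_biUnion_le (s := F)
        (t := fun v => St.filter (fun u => Gs.Adj v u))
      have h3 : ∀ v ∈ F, (St.filter (fun u => Gs.Adj v u)).card = Δ := by
        intro v hv
        rw [hF, Finset.mem_filter] at hv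
        have hvSt := hv.1
        have hsum : Gs.degIn St v + Gs.degOut St v = D := by
          rw [degIn_add_degOut, hdegSt v hvSt]
        have : (Gs.degIn St v : ℤ) = Δ := by
          have := hv.2
          omega
        have hgoal : Gs.degIn St v = Δ := by exact_mod_cast this
        rw [← hgoal]
        rfl
      have h4 : ∑ v ∈ F, (St.filter (fun u => Gs.Adj v u)).card = F.card * Δ := by
        rw [Finset.sum_congr rfl h3, Finset.sum_const, smul_eq_mul]
      have h5 : St.card ≤ F.card * Δ := by
        calc St.card ≤ (F.biUnion (fun v => St.filter (fun u => Gs.Adj v u))).card := h1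
          _ ≤ ∑ v ∈ F, (St.filter (fun u => Gs.Adj v u)).card := h2
          _ = F.card * Δ := h4
      rw [hStcard] at h5
      exact_mod_cast h5
    -- pin down the parameters
    have hFle : F.card ≤ 2 := by omega
    have hcases : F.card = 1 ∨ F.card = 2 := by omega
    have hparams : F.card = 2 ∧ Δ = 5 ∧ s = 1 := by
      rcases hcases with hc | hc
      · rw [hc] at hnF
        omega
      · rw [hc] at hnF
        refine ⟨hc, ?_, ?_⟩ <;> omega
    obtain ⟨hF2, hΔ5, hs1⟩ := hparams
    subst hΔ5
    have hD6 : D = 6 := by omega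
    have hpn1 : p = n + 1 := by omega
    have hL1 : L.card = 1 := by omega
    obtain ⟨w, hLw⟩ := Finset.card_eq_one.1 hL1
    have hwL : w ∈ L := by rw [hLw]; exact Finset.mem_singleton_self w
    have hu₀w : u₀ = w := by
      rw [hLw, Finset.mem_singleton] at hu₀L
      exact hu₀L
    have hdw : Gs.degree w = 2 := by
      rw [← hu₀w]
      exact_mod_cast (by omega : (Gs.degree u₀ : ℤ) = 2)
    have hFsubNw : F ⊆ Gs.neighborFinset w := by
      intro v hv
      rw [SimpleGraph.mem_neighborFinset]
      exact (hFadjL v hv w hwL).symm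
    have hNwF : Gs.neighborFinset w = F := by
      symm
      apply Finset.eq_of_subset_of_card_le hFsubNw
      rw [SimpleGraph.card_neighborFinset_eq_degree, hdw, hF2]
    obtain ⟨v1, v2, hv12, hFv⟩ := Finset.card_eq_two.1 hF2
    have hv1F : v1 ∈ F := by rw [hFv]; exact Finset.mem_insert_self _ _
    have hv2F : v2 ∈ F := by rw [hFv]; simp
    have hv1St : v1 ∈ St := (Finset.mem_filter.1 hv1F).1
    have hv2St : v2 ∈ St := (Finset.mem_filter.1 hv2F).1
    have hdegv1 : Gs.degree v1 = 6 := by rw [hdegSt v1 hv1St, hD6]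
    have hdegv2 : Gs.degree v2 = 6 := by rw [hdegSt v2 hv2St, hD6]
    have hadj12 : Gs.Adj v1 v2 := by
      obtain ⟨v, hvF, hadj⟩ := hdom v1 hv1St
      rw [hFv] at hvF
      rcases Finset.mem_insert.1 hvF with rfl | hv
      · exact absurd hadj (Gs.irrefl)
      · rw [Finset.mem_singleton] at hv
        subst hv
        exact hadj.symm
    have hwv1 : Gs.Adj w v1 := (hFadjL v1 hv1F w hwL).symm
    have hwv2 : Gs.Adj w v2 := (hFadjL v2 hv2F w hwL).symm
    have hwnev1 : w ≠ v1 := hwv1.ne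
    have hwnev2 : w ≠ v2 := hwv2.ne
    have hcov : ∀ x : W, x ≠ v1 → x ≠ v2 → Gs.Adj v1 x ∨ Gs.Adj v2 x := by
      intro x hx1 hx2
      by_cases hxSt : x ∈ St
      · obtain ⟨v, hvF, hadj⟩ := hdom x hxSt
        rw [hFv] at hvF
        rcases Finset.mem_insert.1 hvF with rfl | hv
        · exact Or.inl hadj
        · rw [Finset.mem_singleton] at hv
          subst hv
          exact Or.inr hadj
      · have hxL : x ∈ L := by
          by_contra hxl
          exact hxSt (hmemSt x hxl)
        rw [hLw, Finset.mem_singleton] at hxL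
        subst hxL
        exact Or.inl hwv1.symm
    have hnbrsglob : ∀ x, Gs.Adj w x → x = v1 ∨ x = v2 := by
      intro x hadj
      have hx : x ∈ Gs.neighborFinset w := SimpleGraph.mem_neighborFinset _ _ _ |>.2 hadj
      rw [hNwF, hFv] at hx
      rcases Finset.mem_insert.1 hx with h | h
      · exact Or.inl h
      · exact Or.inr (Finset.mem_singleton.1 h)
    have hStmem : ∀ x : W, x ≠ w → x ∈ St := by
      intro x hx
      apply hmemSt
      rw [hLw, Finset.mem_singleton]
      exact hx
    -- n ≥ 7
    have hn7 : 7 ≤ n := by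
      have hFSt : F ⊆ St := Finset.filter_subset _ _
      have hSF : (St \ F).Nonempty := by
        rw [← Finset.card_pos, Finset.card_sdiff_of_subset hFSt, hStcard, hF2]
        omega
      obtain ⟨u, hu⟩ := hSF
      rw [Finset.mem_sdiff] at hu
      have huSt := hu.1
      have hdOut : Gs.degOut St u = 0 := by
        have h1 := hdegOutSt u
        have h2 : Gs.degOut St u ≠ L.card := by
          intro heq
          exact hu.2 (Finset.mem_filter.2 ⟨huSt, heq⟩)
        omega
      have hdIn : Gs.degIn St u = 6 := by
        have hsum := degIn_add_degOut (G := Gs) St u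
        rw [hdegSt u huSt, hD6] at hsum
        omega
      have hsub : St.filter (fun x => Gs.Adj u x) ⊆ St.erase u := by
        intro x hx
        rw [Finset.mem_filter] at hx
        rw [Finset.mem_erase]
        refine ⟨?_, hx.1⟩
        intro heq
        exact Gs.irrefl (heq ▸ hx.2)
      have hcard := Finset.card_le_card hsub
      rw [Finset.card_erase_of_mem huSt, hStcard] at hcard
      rw [SimpleGraph.degIn] at hdIn
      omega
    -- n even
    have hneven : n % 2 = 0 := by
      have e2 := G.sum_degrees_eq_twice_card_edges
      rw [Finset.sum_congr rfl (fun v _ => hreg v), Finset.sum_const, smul_eq_mul,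
        Finset.card_univ, ← hn] at e2
      omega
    have hn10 : n ≤ 10 := by omega
    -- total number of connected sets is the same for both graphs
    set CsF := Finset.univ.filter
      (fun S : Finset W => (Gs.induce (S : Set W)).Connected) with hCsF
    set CGF := Finset.univ.filter
      (fun S : Finset V => (G.induce (S : Set V)).Connected) with hCGF
    have hCeq : CsF.card = CGF.card := by
      rw [hCsF, hCGF, ← sum_allianceCoeff, ← sum_allianceCoeff]
      have hstep1 : ∑ k ∈ Finset.Icc (-(Gs.maxDegree : ℤ)) (Gs.maxDegree : ℤ),
            Gs.allianceCoeff k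
          = ∑ k ∈ Finset.Icc (-(Gs.maxDegree : ℤ)) (Gs.maxDegree : ℤ),
            G.allianceCoeff (k + s) :=
        Finset.sum_congr rfl (fun k _ => φ k)
      rw [hstep1]
      rw [show ∑ k ∈ Finset.Icc (-(Gs.maxDegree : ℤ)) (Gs.maxDegree : ℤ),
            G.allianceCoeff (k + s)
          = ∑ j ∈ (Finset.Icc (-(Gs.maxDegree : ℤ)) (Gs.maxDegree : ℤ)).image (· + s),
            G.allianceCoeff j from
        (Finset.sum_image (by intro a _ b _ hab; exact add_right_cancel hab)).symm]
      rw [Finset.image_add_right_Icc]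
      have hDD : (Gs.maxDegree : ℤ) = (D : ℤ) := by rw [hD]
      have hend : Finset.Icc (-(Gs.maxDegree : ℤ) + s) ((Gs.maxDegree : ℤ) + s)
          = Finset.Icc (-(5 : ℕ) : ℤ) (((5 : ℕ) : ℤ) + 2 * s) := by
        congr 1 <;> omega
      rw [hend, hmaxG]
      symm
      apply Finset.sum_subset
      · exact Finset.Icc_subset_Icc (le_refl _) (by omega)
      · intro j hj hnj
        rw [Finset.mem_Icc] at hj
        have hgt : ((5 : ℕ) : ℤ) < j := by
          by_contra hle
          push_neg at hle
          exact hnj (Finset.mem_Icc.2 ⟨hj.1, hle⟩)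
        exact allianceCoeff_eq_zero_of_gt (by rw [hmaxG]; omega)
    clear_value CsF CGF St L F
    -- the key per-side counting bound
    have key : ∀ va vb : W, Gs.Adj w va → Gs.Adj w vb →
        (∀ x, Gs.Adj w x → x = va ∨ x = vb) → va ≠ vb → Gs.Adj va vb →
        2 ^ (n - 1) ≤ (CsF.filter (fun S => va ∈ S ∧ vb ∉ S)).card
          + 2 * ((n - 6) * (2 ^ (n - 8) * 2 ^ (n - 7))) := by
      intro va vb hwa hwb hnbrg hab hadjab
      have hwna : w ≠ va := hwa.ne
      have hwnb : w ≠ vb := hwb.ne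
      have haSt : va ∈ St := hStmem va (Ne.symm hwna)
      have hdega : Gs.degree va = 6 := by rw [hdegSt va haSt, hD6]
      set Ω : Finset W := (Finset.univ.erase vb).erase w with hΩ
      have hmemΩ : ∀ x : W, x ∈ Ω ↔ (x ≠ w ∧ x ≠ vb) := by
        intro x
        rw [hΩ, Finset.mem_erase, Finset.mem_erase]
        exact ⟨fun hh => ⟨hh.1, hh.2.1⟩, fun hh => ⟨hh.1, hh.2, Finset.mem_univ x⟩⟩
      have hΩcard : Ω.card = n - 1 := by
        rw [hΩ, Finset.card_erase_of_mem, Finset.card_erase_of_mem (Finset.mem_univ vb),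
          Finset.card_univ, ← hp]
        · omega
        · rw [Finset.mem_erase]
          exact ⟨hwnb, Finset.mem_univ w⟩
      clear_value Ω
      have hvaΩ : va ∈ Ω := (hmemΩ va).2 ⟨Ne.symm hwna, hab⟩
      -- the count of all subsets of Ω containing va
      set B0 := Finset.univ.filter (fun S : Finset W => S ⊆ Ω ∧ va ∈ S) with hB0
      have hB0card : B0.card = 2 ^ (n - 2) := by
        have hshape : B0 = Finset.univ.filter
            (fun S : Finset W => S ⊆ Ω ∧ ({va} : Finset W) ⊆ S) := by
          rw [hB0]
          apply Finset.filter_congr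
          intro S _
          rw [Finset.singleton_subset_iff]
        rw [hshape, card_filter_subset_mem Ω {va} (Finset.singleton_subset_iff.2 hvaΩ),
          Finset.card_singleton, hΩcard]
        have hexp : n - 1 - 1 = n - 2 := by omega
        rw [hexp]
      have hB0mem : ∀ S : Finset W, S ∈ B0 ↔ (S ⊆ Ω ∧ va ∈ S) := by
        intro S
        rw [hB0, Finset.mem_filter]
        exact ⟨fun hh => hh.2, fun hh => ⟨Finset.mem_univ S, hh⟩⟩
      clear_value B0
      set Y := B0.filter (fun S : Finset W => (Gs.induce (S : Set W)).Connected) with hY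
      set Dsc := B0 \ Y with hDsc
      have hYmem : ∀ S : Finset W, S ∈ Y ↔
          (S ⊆ Ω ∧ va ∈ S ∧ (Gs.induce (S : Set W)).Connected) := by
        intro S
        rw [hY, Finset.mem_filter, hB0mem]
        exact ⟨fun hh => ⟨hh.1.1, hh.1.2, hh.2⟩, fun hh => ⟨⟨hh.1, hh.2.1⟩, hh.2.2⟩⟩
      have hYsub : Y ⊆ B0 := by
        rw [hY]; exact Finset.filter_subset _ _
      have hDscmem : ∀ S : Finset W, S ∈ Dsc ↔
          (S ⊆ Ω ∧ va ∈ S ∧ ¬ (Gs.induce (S : Set W)).Connected) := by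
        intro S
        rw [hDsc, Finset.mem_sdiff, hB0mem]
        constructor
        · rintro ⟨⟨hsub, hva⟩, hnY⟩
          exact ⟨hsub, hva, fun hc => hnY ((hYmem S).2 ⟨hsub, hva, hc⟩)⟩
        · rintro ⟨hsub, hva, hnc⟩
          exact ⟨⟨hsub, hva⟩, fun hc => hnc ((hYmem S).1 hc).2.2⟩
      have hYD : Y.card + Dsc.card = 2 ^ (n - 2) := by
        rw [hDsc]
        have hsd := Finset.card_sdiff_add_card_eq_card hYsub
        omega
      clear_value Y Dsc
      -- the set Z1 of non-neighbours of va inside Ω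
      set Z1 := (Ω.filter (fun x => ¬ Gs.Adj va x)).erase va with hZ1
      have hZ1mem : ∀ b, b ∈ Z1 ↔ (b ∈ Ω ∧ b ≠ va ∧ ¬ Gs.Adj va b) := by
        intro b
        rw [hZ1, Finset.mem_erase, Finset.mem_filter]
        exact ⟨fun hh => ⟨hh.2.1, hh.1, hh.2.2⟩, fun hh => ⟨hh.2.1, hh.1, hh.2.2⟩⟩
      have hZ1card : Z1.card = n - 6 := by
        have hfa : Ω.filter (fun x => Gs.Adj va x)
            = ((Gs.neighborFinset va).erase vb).erase w := by
          ext x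
          constructor
          · intro hx
            rw [Finset.mem_filter] at hx
            obtain ⟨hxΩ, hadj⟩ := hx
            obtain ⟨hxw, hxvb⟩ := (hmemΩ x).1 hxΩ
            rw [Finset.mem_erase, Finset.mem_erase, SimpleGraph.mem_neighborFinset]
            exact ⟨hxw, hxvb, hadj⟩
          · intro hx
            rw [Finset.mem_erase, Finset.mem_erase, SimpleGraph.mem_neighborFinset] at hx
            exact Finset.mem_filter.2 ⟨(hmemΩ x).2 ⟨hx.1, hx.2.1⟩, hx.2.2⟩
        have hfacard : (Ω.filter (fun x => Gs.Adj va x)).card = 4 := by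
          rw [hfa, Finset.card_erase_of_mem, Finset.card_erase_of_mem,
            SimpleGraph.card_neighborFinset_eq_degree, hdega]
          · rw [SimpleGraph.mem_neighborFinset]; exact hadjab
          · rw [Finset.mem_erase, SimpleGraph.mem_neighborFinset]
            exact ⟨hwnb, hwa.symm⟩
        have hsplitΩ := Finset.card_filter_add_card_filter_not
          (s := Ω) (p := fun x => Gs.Adj va x)
        rw [hZ1, Finset.card_erase_of_mem]
        · rw [hΩcard, hfacard] at hsplitΩ
          omega
        · rw [Finset.mem_filter]
          exact ⟨hvaΩ, Gs.irrefl⟩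
      clear_value Z1
      -- the P-sets
      set P : W → Finset W := fun b0 =>
        ((Ω.filter (fun x => ¬ Gs.Adj b0 x)).erase b0).erase va with hP
      have hPmem : ∀ b0 x : W, x ∈ P b0 ↔
          (x ≠ va ∧ x ≠ b0 ∧ x ∈ Ω ∧ ¬ Gs.Adj b0 x) := by
        intro b0 x
        rw [hP]
        rw [Finset.mem_erase, Finset.mem_erase, Finset.mem_filter]
      have hPcard : ∀ b0 ∈ Z1, (P b0).card ≤ n - 8 := by
        intro b0 hb0
        rw [hZ1mem] at hb0
        obtain ⟨hb0Ω, hb0va, hb0nadj⟩ := hb0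
        have hb0w : b0 ≠ w := ((hmemΩ b0).1 hb0Ω).1
        have hb0vb : b0 ≠ vb := ((hmemΩ b0).1 hb0Ω).2
        have hb0St : b0 ∈ St := hStmem b0 hb0w
        have hdegb0 : Gs.degree b0 = 6 := by rw [hdegSt b0 hb0St, hD6]
        have hb0nw : ¬ Gs.Adj b0 w := by
          intro hadj
          rcases hnbrg b0 hadj.symm with hh | hh
          · exact hb0va hh
          · exact hb0vb hh
        have hfb : Ω.filter (fun x => Gs.Adj b0 x) = (Gs.neighborFinset b0).erase vb := by
          ext x
          constructor
          · intro hx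
            rw [Finset.mem_filter] at hx
            obtain ⟨hxΩ, hadj⟩ := hx
            rw [Finset.mem_erase, SimpleGraph.mem_neighborFinset]
            exact ⟨((hmemΩ x).1 hxΩ).2, hadj⟩
          · intro hx
            rw [Finset.mem_erase, SimpleGraph.mem_neighborFinset] at hx
            refine Finset.mem_filter.2 ⟨(hmemΩ x).2 ⟨?_, hx.1⟩, hx.2⟩
            intro hxw
            exact hb0nw (hxw ▸ hx.2)
        have hfbcard : 5 ≤ (Ω.filter (fun x => Gs.Adj b0 x)).card := by
          rw [hfb]
          have hpred := Finset.pred_card_le_card_erase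
            (a := vb) (s := Gs.neighborFinset b0)
          rw [SimpleGraph.card_neighborFinset_eq_degree, hdegb0] at hpred
          omega
        have hsplitΩ := Finset.card_filter_add_card_filter_not
          (s := Ω) (p := fun x => Gs.Adj b0 x)
        rw [hΩcard] at hsplitΩ
        have h1 : (Ω.filter (fun x => ¬ Gs.Adj b0 x)).card ≤ n - 6 := by omega
        have hb0mem : b0 ∈ Ω.filter (fun x => ¬ Gs.Adj b0 x) :=
          Finset.mem_filter.2 ⟨hb0Ω, Gs.irrefl⟩
        have hvamem : va ∈ (Ω.filter (fun x => ¬ Gs.Adj b0 x)).erase b0 := by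
          rw [Finset.mem_erase, Finset.mem_filter]
          exact ⟨Ne.symm hb0va, hvaΩ, fun hadj => hb0nadj hadj.symm⟩
        rw [hP]
        rw [Finset.card_erase_of_mem hvamem, Finset.card_erase_of_mem hb0mem]
        omega
      clear_value P
      -- the disconnected-count bound
      have hDscbound : Dsc.card ≤ (n - 6) * (2 ^ (n - 8) * 2 ^ (n - 7)) := by
        have hDsceq : Dsc = Finset.univ.filter (fun S : Finset W => S ⊆ Ω ∧ va ∈ S ∧
            ¬ (Gs.induce (S : Set W)).Connected) := by
          ext S
          rw [hDscmem, Finset.mem_filter]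
          exact ⟨fun hh => ⟨Finset.mem_univ S, hh⟩, fun hh => hh.2⟩
        rw [hDsceq]
        have hmain := disconnected_count_le (G := Gs) (Ω := Ω) (v1 := va) Z1
          (by
            intro b hb hbva hbnadj
            rw [hZ1mem]
            exact ⟨hb, hbva, hbnadj⟩)
          P
          (by
            intro b0 hb0 x hx hxva hxb0 hxnadj
            rw [hPmem]
            exact ⟨hxva, hxb0, hx, hxnadj⟩)
        refine hmain.trans ?_
        have hterm : ∀ b0 ∈ Z1, 2 ^ (P b0).card * 2 ^ (Z1.erase b0).card
            ≤ 2 ^ (n - 8) * 2 ^ (n - 7) := by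
          intro b0 hb0
          apply Nat.mul_le_mul
          · exact Nat.pow_le_pow_right (by omega) (hPcard b0 hb0)
          · apply Nat.pow_le_pow_right (by omega)
            rw [Finset.card_erase_of_mem hb0, hZ1card]
            omega
        calc ∑ b0 ∈ Z1, 2 ^ (P b0).card * 2 ^ (Z1.erase b0).card
            ≤ ∑ _b0 ∈ Z1, 2 ^ (n - 8) * 2 ^ (n - 7) := Finset.sum_le_sum hterm
          _ = Z1.card * (2 ^ (n - 8) * 2 ^ (n - 7)) := by
              rw [Finset.sum_const, smul_eq_mul]
          _ = (n - 6) * (2 ^ (n - 8) * 2 ^ (n - 7)) := by rw [hZ1card]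
      -- relating the (va ∈, vb ∉) class to Y by toggling w
      set X := CsF.filter (fun S => va ∈ S ∧ vb ∉ S) with hX
      have hXmem : ∀ S : Finset W, S ∈ X ↔
          ((Gs.induce (S : Set W)).Connected ∧ va ∈ S ∧ vb ∉ S) := by
        intro S
        rw [hX, Finset.mem_filter, hCsF, Finset.mem_filter]
        exact ⟨fun hh => ⟨hh.1.2, hh.2.1, hh.2.2⟩,
          fun hh => ⟨⟨Finset.mem_univ S, hh.1⟩, hh.2.1, hh.2.2⟩⟩
      clear_value X
      have hXsplit := Finset.card_filter_add_card_filter_not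
        (s := X) (p := fun S => w ∈ S)
      have hbij : (X.filter (fun S => w ∈ S)).card
          = (X.filter (fun S => ¬ w ∈ S)).card := by
        refine Finset.card_bij' (fun S _ => S.erase w) (fun S _ => insert w S) ?_ ?_ ?_ ?_
        · intro S hS
          rw [Finset.mem_filter, hXmem] at hS
          obtain ⟨⟨hSconn, hvaS, hvbS⟩, hwS⟩ := hS
          rw [Finset.mem_filter, hXmem]
          refine ⟨⟨?_, ?_, ?_⟩, ?_⟩
          · exact (conn_toggle_leaf hwa hnbrg hvaS hvbS hwS).1 hSconn
          · rw [Finset.mem_erase]; exact ⟨Ne.symm hwna, hvaS⟩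
          · intro hc; exact hvbS (Finset.mem_of_mem_erase hc)
          · exact Finset.notMem_erase w S
        · intro S hS
          rw [Finset.mem_filter, hXmem] at hS
          obtain ⟨⟨hSconn, hvaS, hvbS⟩, hwS⟩ := hS
          have hvbins : vb ∉ insert w S := by
            rw [Finset.mem_insert]
            push_neg
            exact ⟨Ne.symm hwnb, hvbS⟩
          rw [Finset.mem_filter, hXmem]
          refine ⟨⟨?_, Finset.mem_insert_of_mem hvaS, hvbins⟩, Finset.mem_insert_self w S⟩
          apply (conn_toggle_leaf hwa hnbrg (Finset.mem_insert_of_mem hvaS) hvbins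
            (Finset.mem_insert_self w S)).2
          rw [Finset.erase_insert hwS]
          exact hSconn
        · intro S hS
          exact Finset.insert_erase (Finset.mem_filter.1 hS).2
        · intro S hS
          exact Finset.erase_insert (Finset.mem_filter.1 hS).2
      have hXout : X.filter (fun S => ¬ w ∈ S) = Y := by
        ext S
        rw [Finset.mem_filter, hXmem, hYmem]
        constructor
        · rintro ⟨⟨hconnS, hvaS, hvbS⟩, hwS⟩
          refine ⟨?_, hvaS, hconnS⟩
          intro x hx
          exact (hmemΩ x).2 ⟨fun hxw => hwS (hxw ▸ hx), fun hxvb => hvbS (hxvb ▸ hx)⟩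
        · rintro ⟨hSΩ, hvaS, hconnS⟩
          exact ⟨⟨hconnS, hvaS, fun hc => ((hmemΩ vb).1 (hSΩ hc)).2 rfl⟩,
            fun hc => ((hmemΩ w).1 (hSΩ hc)).1 rfl⟩
      have hXcard : X.card = 2 * Y.card := by
        rw [hbij, hXout] at hXsplit
        omega
      -- conclude
      have hpow : 2 ^ (n - 1) = 2 * 2 ^ (n - 2) := by
        have hexp : n - 1 = (n - 2) + 1 := by omega
        rw [hexp, pow_succ]
        ring
      rw [hXcard, hpow]
      omega
    have hkey1 := key v1 v2 hwv1 hwv2 hnbrsglob hv12 hadj12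
    have hkey2 := key v2 v1 hwv2 hwv1 (fun x hx => (hnbrsglob x hx).symm)
      hv12.symm hadj12.symm
    -- four-way split of the connected-set count of Gs
    have hs1c := Finset.card_filter_add_card_filter_not
      (s := CsF) (p := fun S => v1 ∈ S)
    have hs2a := Finset.card_filter_add_card_filter_not
      (s := CsF.filter (fun S => v1 ∈ S)) (p := fun S => v2 ∈ S)
    have hs2b := Finset.card_filter_add_card_filter_not
      (s := CsF.filter (fun S => ¬ v1 ∈ S)) (p := fun S => v2 ∈ S)
    rw [Finset.filter_filter, Finset.filter_filter] at hs2a hs2b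
    have hswap : CsF.filter (fun S => ¬ v1 ∈ S ∧ v2 ∈ S)
        = CsF.filter (fun S => v2 ∈ S ∧ ¬ v1 ∈ S) := by
      apply Finset.filter_congr
      intro S _
      exact and_comm
    rw [hswap] at hs2b
    -- the (v1 ∈, v2 ∈) class
    have hT11 : (CsF.filter (fun S => v1 ∈ S ∧ v2 ∈ S)).card = 2 ^ (n - 1) := by
      have hall : CsF.filter (fun S => v1 ∈ S ∧ v2 ∈ S)
          = Finset.univ.filter
              (fun S : Finset W => S ⊆ Finset.univ ∧ ({v1, v2} : Finset W) ⊆ S) := by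
        ext S
        rw [Finset.mem_filter, hCsF, Finset.mem_filter, Finset.mem_filter]
        constructor
        · rintro ⟨⟨-, -⟩, h1, h2⟩
          refine ⟨Finset.mem_univ S, Finset.subset_univ S, ?_⟩
          intro x hx
          rw [Finset.mem_insert, Finset.mem_singleton] at hx
          rcases hx with rfl | rfl
          · exact h1
          · exact h2
        · rintro ⟨-, -, hsub⟩
          have h1 : v1 ∈ S := hsub (Finset.mem_insert_self _ _)
          have h2 : v2 ∈ S := hsub (by
            rw [Finset.mem_insert, Finset.mem_singleton]
            exact Or.inr rfl)
          exact ⟨⟨Finset.mem_univ S, conn_of_dominating_pair hadj12 hcov h1 h2⟩, h1, h2⟩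
      rw [hall, card_filter_subset_mem _ _ (Finset.subset_univ _), Finset.card_univ,
        Finset.card_insert_of_notMem (by rw [Finset.mem_singleton]; exact hv12),
        Finset.card_singleton, ← hp]
      have hexp : p - 2 = n - 1 := by omega
      rw [hexp]
    -- the (v1 ∉, v2 ∉) class contains {w}
    have hT00 : 1 ≤ (CsF.filter (fun S => ¬ v1 ∈ S ∧ ¬ v2 ∈ S)).card := by
      apply Finset.card_pos.2
      refine ⟨{w}, Finset.mem_filter.2 ⟨?_, ?_, ?_⟩⟩
      · rw [hCsF, Finset.mem_filter]
        exact ⟨Finset.mem_univ _, conn_singleton w⟩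
      · intro hc
        rw [Finset.mem_singleton] at hc
        exact hwnev1 hc.symm
      · intro hc
        rw [Finset.mem_singleton] at hc
        exact hwnev2 hc.symm
    -- upper bound from G
    have hCle : CGF.card ≤ 2 ^ n - 1 := by
      rw [hCGF, hn]
      exact card_conn_le
    rw [hCeq] at hs1c
    -- final numeric contradiction
    obtain h8 | h10 : n = 8 ∨ n = 10 := by omega
    · rw [h8] at hT11 hkey1 hkey2 hCle
      norm_num at hT11 hkey1 hkey2 hCle
      omega
    · rw [h10] at hT11 hkey1 hkey2 hCle
      norm_num at hT11 hkey1 hkey2 hCle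
      omega
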